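/- There exist constants C₀ ≥ 1 and c ≥ 1 such that for all natural numbers M ≥ 1 and N ≥ 2 with N ≥ C₀ · M², every real polynomial p of degree at most M − 1 satisfies sup_{x ∈ [−1,1]} |p(x)| ≤ c · max_{1 ≤ j ≤ N} |p(x_j)|, where x_j = −1 + 2(j − 1)/(N − 1), j = 1, …, N, are the N equidistant points in [−1, 1]. -/

import Mathlib

set_option maxHeartbeats 1000000

open Polynomial Complex


lemma ez_geom_real (α β s δ : ℝ) (hs : 0 < s) (hsum : α^2 + β^2 = s^2)
    (hδ0 : 0 < δ) (hδ1 : δ ≤ 1) (hslt : s < 1 - δ)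
    (him : |β * (1 - s^2)| < δ^2/4 * s^2)
    (hre : |α| * (s^2 + 1) < (1 + δ^2/8) * (2*s^2)) : False := by
  have hs1 : s < 1 := by linarith
  have h1s : 0 < 1 - s^2 := by nlinarith
  rcases le_or_gt (δ^2 * s^2 / 4) (β^2) with hb | hb
  · have hβ : δ * s / 2 ≤ |β| := by
      nlinarith [abs_nonneg β, _root_.sq_abs β, sq_nonneg (|β| - δ*s/2)]
    have h2 : |β * (1-s^2)| = |β| * (1 - s^2) := by
      rw [abs_mul, abs_of_pos h1s]
    rw [h2] at him
    have h3 : δ < 1 - s^2 := by nlinarith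
    have h4 : δ * s / 2 * δ ≤ δ * s / 2 * (1 - s^2) := by
      apply mul_le_mul_of_nonneg_left h3.le (by positivity)
    have h5 : δ * s / 2 * (1 - s^2) ≤ |β| * (1 - s^2) :=
      mul_le_mul_of_nonneg_right hβ h1s.le
    have h6 : δ^2 * s / 2 < δ^2 * s^2 / 4 := by nlinarith
    nlinarith [mul_pos (mul_pos hδ0 hδ0) hs]
  · have hα : s^2 * (1 - δ^2/4) < α^2 := by nlinarith
    have h4 : α^2 * (s^2+1)^2 < 4*s^4 * (1 + δ^2/8)^2 := by
      have h5 : 0 ≤ |α| * (s^2+1) := by positivity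
      have hsq := mul_self_lt_mul_self h5 hre
      have key : (|α| * (s^2+1)) * (|α| * (s^2+1)) = α^2*(s^2+1)^2 := by
        rw [← _root_.sq_abs α]; ring
      have key2 : ((1+δ^2/8)*(2*s^2))*((1+δ^2/8)*(2*s^2)) = 4*s^4*(1+δ^2/8)^2 := by ring
      rw [key, key2] at hsq
      exact hsq
    have h6 : (1 - s)^2 ≥ s * (1-s)^2 := by nlinarith [sq_nonneg (1-s)]
    have h7 : 1 + s^2 ≥ 2*s*(1 + (1-s)^2/2) := by nlinarith
    have h8 : δ^2 < (1-s)^2 := by nlinarith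
    have h11 : 1 + s^2 ≥ 2*s*(1+δ^2/2) := by nlinarith
    have h12 : (0:ℝ) ≤ 2*s*(1+δ^2/2) := by positivity
    have h9 : (1+s^2)^2 ≥ 4*s^2*(1 + δ^2/2)^2 := by
      have := mul_self_le_mul_self h12 h11
      nlinarith [this]
    have he1 : δ^2 ≤ 1 := by nlinarith
    have he2 : δ^2*δ^2 ≤ δ^2 := by nlinarith
    have he3 : δ^2*δ^2*δ^2 ≤ δ^2 := by nlinarith [sq_nonneg δ, sq_nonneg (δ^2)]
    have h13 : (1 - δ^2/4) * (1+δ^2/2)^2 ≥ (1+δ^2/8)^2 := by nlinarith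
    -- chain
    have c1 : s^2 * (1 - δ^2/4) * (s^2+1)^2 < 4*s^4 * (1 + δ^2/8)^2 := by
      calc s^2 * (1 - δ^2/4) * (s^2+1)^2 < α^2 * (s^2+1)^2 := by
            apply mul_lt_mul_of_pos_right hα (by positivity)
        _ < 4*s^4 * (1 + δ^2/8)^2 := h4
    have c2 : s^2 * (1 - δ^2/4) * (4*s^2*(1 + δ^2/2)^2) ≤ s^2 * (1 - δ^2/4) * (s^2+1)^2 := by
      have hnn : (0:ℝ) ≤ s^2 * (1 - δ^2/4) := by nlinarith
      have hmm := mul_le_mul_of_nonneg_left h9 hnn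
      nlinarith [hmm]
    have c3 : 4*s^4 * (1 + δ^2/8)^2 ≤ 4*s^4 * ((1 - δ^2/4) * (1+δ^2/2)^2) := by
      apply mul_le_mul_of_nonneg_left h13 (by positivity)
    nlinarith [c1, c2, c3]


noncomputable def ezQ (P : Polynomial ℂ) (n : ℕ) : Polynomial ℂ :=
  ∑ k ∈ Finset.range (n+1), Polynomial.C (P.coeff k / 2^k) * (X^2 + 1)^k * X^(n-k)

lemma ezQ_eval (P : Polynomial ℂ) (n : ℕ) (hP : P.natDegree ≤ n) (w : ℂ) (hw : w ≠ 0) :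
    (ezQ P n).eval w = w^n * P.eval ((w^2+1)/(2*w)) := by
  rw [Polynomial.eval_eq_sum_range' (Nat.lt_succ_of_le hP), ezQ]
  rw [Polynomial.eval_finset_sum, Finset.mul_sum]
  refine Finset.sum_congr rfl fun k hk => ?_
  rw [Finset.mem_range] at hk
  have hk' : k ≤ n := Nat.lt_succ_iff.mp hk
  simp only [Polynomial.eval_mul, Polynomial.eval_C, Polynomial.eval_pow, Polynomial.eval_add,
    Polynomial.eval_one, Polynomial.eval_X]
  have h2 : (2:ℂ) ≠ 0 := two_ne_zero
  have hwk : w ^ (n-k) * w ^ k = w ^ n := pow_sub_mul_pow w hk'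
  have hinv : w^k * (w^k)⁻¹ = 1 := mul_inv_cancel₀ (pow_ne_zero k hw)
  rw [← hwk, div_pow, mul_pow]
  linear_combination (-(P.coeff k / 2^k * (w^2+1)^k * w^(n-k))) * hinv

lemma ezQ_disk_bound (p : Polynomial ℝ) (n : ℕ) (hp : (p.map (Complex.ofRealHom)).natDegree ≤ n)
    (A : ℝ) (hA : ∀ x ∈ Set.Icc (-1:ℝ) 1, |p.eval x| ≤ A)
    (w : ℂ) (hw : ‖w‖ ≤ 1) :
    ‖(ezQ (p.map Complex.ofRealHom) n).eval w‖ ≤ A := by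
  set P := p.map Complex.ofRealHom with hPdef
  have hdiff : DiffContOnCl ℂ (fun z => (ezQ P n).eval z) (Metric.ball (0:ℂ) 1) :=
    ((ezQ P n).differentiable).diffContOnCl
  have hbd : ∀ z ∈ frontier (Metric.ball (0:ℂ) 1), ‖(ezQ P n).eval z‖ ≤ A := by
    intro z hz
    rw [frontier_ball (0:ℂ) one_ne_zero] at hz
    have hz1 : ‖z‖ = 1 := by simpa using hz
    have hz0 : z ≠ 0 := by intro h; rw [h] at hz1; simp at hz1
    rw [ezQ_eval P n hp z hz0]
    have hinv : z⁻¹ = starRingEnd ℂ z := Complex.inv_eq_conj (by simpa using hz1)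
    have hre : (z^2+1)/(2*z) = ((z.re : ℝ) : ℂ) := by
      have : (z^2+1)/(2*z) = (z + z⁻¹)/2 := by
        field_simp
      rw [this, hinv, Complex.add_conj]
      push_cast
      ring
    rw [hre]
    have : P.eval ((z.re : ℝ) : ℂ) = ((p.eval z.re : ℝ) : ℂ) := by
      rw [hPdef, Polynomial.eval_map]
      exact Polynomial.eval₂_at_apply Complex.ofRealHom z.re
    rw [this, norm_mul, norm_pow, hz1, one_pow, one_mul, Complex.norm_real]
    exact hA z.re ⟨neg_le_of_abs_le (by rw [← hz1]; exact Complex.abs_re_le_norm z),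
      le_of_abs_le (by rw [← hz1]; exact Complex.abs_re_le_norm z)⟩
  have hcl : w ∈ closure (Metric.ball (0:ℂ) 1) := by
    rw [closure_ball (0:ℂ) one_ne_zero]
    simpa using hw
  exact Complex.norm_le_of_forall_mem_frontier_norm_le Metric.isBounded_ball hdiff hbd hcl

lemma ez_geom (u : ℂ) (hu0 : u ≠ 0) (hu1 : ‖u‖ ≤ 1) (x₀ : ℝ) (hx₀ : |x₀| ≤ 1)
    (δ : ℝ) (hδ0 : 0 < δ) (hδ1 : δ ≤ 1)
    (hclose : ‖(u^2+1)/(2*u) - (x₀:ℂ)‖ < δ^2/8) : 1 - δ ≤ ‖u‖ := by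
  by_contra hcon
  push_neg at hcon
  set z := (u^2+1)/(2*u) with hzdef
  set s := ‖u‖ with hsdef
  have hs : 0 < s := norm_pos_iff.mpr hu0
  have hnormSq : Complex.normSq u = s^2 := by
    rw [hsdef, Complex.sq_norm]
  have hsum : u.re^2 + u.im^2 = s^2 := by
    rw [← hnormSq, Complex.normSq_apply]; ring
  have hzsplit : z = (u + u⁻¹)/2 := by
    rw [hzdef]; field_simp
  have hzre : z.re = (u.re + u.re/s^2)/2 := by
    rw [hzsplit]; simp [Complex.div_re, Complex.add_re, Complex.inv_re, hnormSq]

  have hzim : z.im = (u.im - u.im/s^2)/2 := by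
    rw [hzsplit]; simp [Complex.div_im, Complex.add_im, Complex.inv_im, hnormSq]
    ring
  have him0 : |z.im| < δ^2/8 := by
    have h1 : |(z - (x₀:ℂ)).im| ≤ ‖z - (x₀:ℂ)‖ := Complex.abs_im_le_norm _
    simpa using lt_of_le_of_lt h1 hclose
  have hre0 : |z.re| < 1 + δ^2/8 := by
    have h1 : |(z - (x₀:ℂ)).re| ≤ ‖z - (x₀:ℂ)‖ := Complex.abs_re_le_norm _
    have h2 : (z - (x₀:ℂ)).re = z.re - x₀ := by simp
    rw [h2] at h1
    have := lt_of_le_of_lt h1 hclose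
    have h3 : |z.re| ≤ |z.re - x₀| + |x₀| := by
      calc |z.re| = |(z.re - x₀) + x₀| := by ring_nf
        _ ≤ |z.re - x₀| + |x₀| := abs_add_le _ _
    linarith
  have hs2 : (0:ℝ) < s^2 := by positivity
  have e1 : u.im * (1 - s^2) = -(z.im * (2*s^2)) := by
    rw [hzim]; field_simp; ring
  have him : |u.im * (1 - s^2)| < δ^2/4 * s^2 := by
    rw [e1, abs_neg, abs_mul, abs_of_pos (by positivity : (0:ℝ) < 2*s^2)]
    calc |z.im| * (2*s^2) < (δ^2/8) * (2*s^2) := by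
          exact mul_lt_mul_of_pos_right him0 (by positivity)
      _ = δ^2/4 * s^2 := by ring
  have e2 : u.re * (s^2 + 1) = z.re * (2*s^2) := by
    rw [hzre]; field_simp
  have hre : |u.re| * (s^2 + 1) < (1 + δ^2/8) * (2*s^2) := by
    have : |u.re * (s^2+1)| = |u.re| * (s^2+1) := by
      rw [abs_mul, abs_of_pos (by positivity : (0:ℝ) < s^2+1)]
    rw [← this, e2, abs_mul, abs_of_pos (by positivity : (0:ℝ) < 2*s^2)]
    exact mul_lt_mul_of_pos_right hre0 (by positivity)
  exact ez_geom_real u.re u.im s δ hs hsum hδ0 hδ1 hcon him hre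

lemma ez_near_bound (p : Polynomial ℝ) (n : ℕ) (hn : 1 ≤ n)
    (hp : (p.map Complex.ofRealHom).natDegree ≤ n) (A : ℝ)
    (hA : ∀ x ∈ Set.Icc (-1:ℝ) 1, |p.eval x| ≤ A)
    (x₀ : ℝ) (hx₀ : |x₀| ≤ 1) (z : ℂ) (hz : ‖z - (x₀:ℂ)‖ < 1/(32*(n:ℝ)^2)) :
    ‖(p.map Complex.ofRealHom).eval z‖ ≤ 2*A := by
  obtain ⟨w, hw⟩ := IsAlgClosed.exists_pow_nat_eq (k := ℂ) (z^2 - 1) zero_lt_two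
  have hprod : (z - w) * (z + w) = 1 := by linear_combination -hw
  set u : ℂ := if ‖z - w‖ ≤ 1 then z - w else z + w with hudef
  have hu0 : u ≠ 0 := by
    rw [hudef]
    split_ifs
    · intro h; rw [h, zero_mul] at hprod; exact one_ne_zero hprod.symm
    · intro h; rw [h, mul_zero] at hprod; exact one_ne_zero hprod.symm
  have hu1 : ‖u‖ ≤ 1 := by
    rw [hudef]
    split_ifs with h
    · exact h
    · push_neg at h
      have hnz : ‖z - w‖ * ‖z + w‖ = 1 := by rw [← norm_mul, hprod, norm_one]
      nlinarith [norm_nonneg (z + w), norm_nonneg (z - w)]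
  have hju : (u^2 + 1)/(2*u) = z := by
    have hquad : u^2 - 2*z*u + 1 = 0 := by
      rw [hudef]; split_ifs <;> linear_combination hw
    field_simp
    linear_combination hquad
  have hnR : (0:ℝ) < (n:ℝ) := by exact_mod_cast Nat.lt_of_lt_of_le Nat.zero_lt_one hn
  have hnR1 : (1:ℝ) ≤ (n:ℝ) := by exact_mod_cast hn
  set δ : ℝ := 1/(2*(n:ℝ)) with hδdef
  have hδ0 : 0 < δ := by positivity
  have hδ1 : δ ≤ 1 := by
    rw [hδdef]; rw [div_le_one (by positivity)]; linarith
  have hclose : ‖(u^2+1)/(2*u) - (x₀:ℂ)‖ < δ^2/8 := by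
    rw [hju]
    have : δ^2/8 = 1/(32*(n:ℝ)^2) := by rw [hδdef]; field_simp; ring
    rw [this]; exact hz
  have hgeom : 1 - δ ≤ ‖u‖ := ez_geom u hu0 hu1 x₀ hx₀ δ hδ0 hδ1 hclose
  have hpow : (1/2 : ℝ) ≤ ‖u‖^n := by
    have h1 : (1 - δ)^n ≤ ‖u‖^n := pow_le_pow_left₀ (by linarith) hgeom n
    have h2 : (1:ℝ) + (n:ℝ) * (-δ) ≤ (1 + (-δ))^n := one_add_mul_le_pow (by linarith) n
    have h3 : (1:ℝ) + (n:ℝ) * (-δ) = 1/2 := by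
      rw [hδdef]; field_simp; ring
    rw [h3] at h2
    have h4 : (1 + (-δ)) = 1 - δ := by ring
    rw [h4] at h2
    linarith
  have hq : ‖(ezQ (p.map Complex.ofRealHom) n).eval u‖ ≤ A :=
    ezQ_disk_bound p n hp A hA u hu1
  rw [ezQ_eval (p.map Complex.ofRealHom) n hp u hu0, hju] at hq
  rw [norm_mul, norm_pow] at hq
  have hev : (0:ℝ) ≤ ‖(p.map Complex.ofRealHom).eval z‖ := norm_nonneg _
  nlinarith [hq, hpow, hev]

/-- Oversampling at equidistant nodes (Ehlich–Zeller type): there are constants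
`C₀ ≥ 1` and `c ≥ 1` such that whenever `N ≥ 2` and `N ≥ C₀ · M²`, every polynomial of
degree at most `M - 1` satisfies `‖p‖_{∞,[-1,1]} ≤ c · max_j |p(x_j)|` at the `N`
equidistant nodes `x_j = -1 + 2(j-1)/(N-1)`; the stability constant is
independent of `M`. -/
theorem equidistant_oversampling_uniform_stability :
    ∃ (C₀ : ℝ) (hC₀ : 1 ≤ C₀) (c : ℝ) (hc : 1 ≤ c),
      ∀ (M : ℕ) (hM : 1 ≤ M) (N : ℕ) (hN2 : 2 ≤ N)
        (hN : C₀ * (M : ℝ) ^ 2 ≤ (N : ℝ)),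
        ∀ p : Polynomial ℝ, p.natDegree ≤ M - 1 →
          ∀ x ∈ Set.Icc (-1 : ℝ) 1,
            |p.eval x| ≤ c *
              Finset.univ.sup' ⟨⟨0, by omega⟩, Finset.mem_univ _⟩
                (fun j : Fin N =>
                  |p.eval (-1 + 2 * (j : ℝ) / ((N : ℝ) - 1))|) := by
  refine ⟨1600, by norm_num, 2, by norm_num, ?_⟩
  intro M hM N hN2 hN p hdeg x hx
  set P := p.map Complex.ofRealHom with hPdef
  have hPeval : ∀ y : ℝ, P.eval ((y:ℝ):ℂ) = ((p.eval y : ℝ) : ℂ) := by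
    intro y
    rw [hPdef, Polynomial.eval_map]
    exact Polynomial.eval₂_at_apply Complex.ofRealHom y
  have hPdeg : P.natDegree ≤ M :=
    le_trans Polynomial.natDegree_map_le (le_trans hdeg (by omega))
  have hMR : (1:ℝ) ≤ (M:ℝ) := by exact_mod_cast hM
  have hM2 : (0:ℝ) < (M:ℝ)^2 := by positivity
  have hNR : 1600*(M:ℝ)^2 ≤ (N:ℝ) := hN
  have hNge : (1600:ℝ) ≤ (N:ℝ) := by nlinarith
  have hN1pos : (0:ℝ) < (N:ℝ) - 1 := by linarith
  -- the maximizer of |p| on [-1,1]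
  obtain ⟨x₀, hx₀mem, hmaxOn⟩ := isCompact_Icc.exists_isMaxOn
    (Set.nonempty_Icc.mpr (by norm_num : (-1:ℝ) ≤ 1))
    ((p.continuous_aeval.abs).continuousOn (s := Set.Icc (-1:ℝ) 1))
  set A := |p.eval x₀| with hAdef
  have hA : ∀ y ∈ Set.Icc (-1:ℝ) 1, |p.eval y| ≤ A := fun y hy => hmaxOn hy
  have hA0 : 0 ≤ A := abs_nonneg _
  have hx₀abs : |x₀| ≤ 1 := abs_le.mpr ⟨hx₀mem.1, hx₀mem.2⟩
  -- nearest grid point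
  set t : ℝ := (x₀ + 1)*((N:ℝ)-1)/2 with htdef
  have hx01 : 0 ≤ x₀ + 1 := by linarith [hx₀mem.1]
  have ht0 : 0 ≤ t := by
    rw [htdef]
    exact div_nonneg (mul_nonneg hx01 hN1pos.le) (by norm_num)
  have htle : t ≤ (N:ℝ) - 1 := by
    rw [htdef]
    have h1 : x₀ + 1 ≤ 2 := by linarith [hx₀mem.2]
    nlinarith
  set j : ℕ := ⌊t⌋₊ with hjdef
  have hjt : (j:ℝ) ≤ t := Nat.floor_le ht0
  have htj : t < (j:ℝ) + 1 := Nat.lt_floor_add_one t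
  have hjlt : j < N := by
    have h2 : (j:ℝ) < (N:ℝ) := by linarith
    exact_mod_cast h2
  set xj : ℝ := -1 + 2*(j:ℝ)/((N:ℝ)-1) with hxjdef
  have hxjmem : xj ∈ Set.Icc (-1:ℝ) 1 := by
    have h0 : 0 ≤ 2*(j:ℝ)/((N:ℝ)-1) := div_nonneg (by positivity) hN1pos.le
    have h2 : 2*(j:ℝ)/((N:ℝ)-1) ≤ 2 := by
      rw [div_le_iff₀ hN1pos]; nlinarith
    constructor
    · rw [hxjdef]; linarith
    · rw [hxjdef]; linarith
  have hx₀eq : x₀ = -1 + 2*t/((N:ℝ)-1) := by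
    rw [htdef]; field_simp; ring
  have hdist : |x₀ - xj| ≤ 2/((N:ℝ)-1) := by
    rw [hx₀eq, hxjdef]
    have he : -1 + 2*t/((N:ℝ)-1) - (-1 + 2*(j:ℝ)/((N:ℝ)-1)) = 2*(t - (j:ℝ))/((N:ℝ)-1) := by
      ring
    rw [he, _root_.abs_of_nonneg (div_nonneg (by linarith : (0:ℝ) ≤ 2*(t - (j:ℝ))) hN1pos.le)]
    rw [div_le_div_iff₀ hN1pos hN1pos]
    nlinarith
  -- key radius
  set d : ℝ := 1/(33*(M:ℝ)^2) with hddef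
  have hd0 : (0:ℝ) < d := by rw [hddef]; positivity
  have hhd : 2/((N:ℝ)-1) ≤ d/12 := by
    rw [hddef]
    have h396 : (0:ℝ) < 396*(M:ℝ)^2 := by positivity
    have he : (1:ℝ)/(33*(M:ℝ)^2)/12 = 1/(396*(M:ℝ)^2) := by field_simp; ring
    rw [he, div_le_div_iff₀ hN1pos h396]
    nlinarith
  -- divide out the node
  obtain ⟨r, hr⟩ := Polynomial.X_sub_C_dvd_sub_C_eval (a := ((xj:ℝ):ℂ)) (p := P)
  have hreval : ∀ z : ℂ, P.eval z - P.eval ((xj:ℝ):ℂ) = (z - ((xj:ℝ):ℂ)) * r.eval z := by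
    intro z
    have h := congrArg (Polynomial.eval z) hr
    simpa using h
  have hfr : ∀ z ∈ frontier (Metric.ball ((x₀:ℝ):ℂ) d), ‖r.eval z‖ ≤ 6*A/d := by
    intro z hz
    rw [frontier_ball _ hd0.ne'] at hz
    have hzd : ‖z - ((x₀:ℝ):ℂ)‖ = d := by
      have := Metric.mem_sphere.mp hz
      rwa [dist_eq_norm] at this
    have hz32 : ‖z - ((x₀:ℝ):ℂ)‖ < 1/(32*(M:ℝ)^2) := by
      rw [hzd, hddef, div_lt_div_iff₀ (by positivity) (by positivity)]
      nlinarith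
    have hPz : ‖P.eval z‖ ≤ 2*A := ez_near_bound p M hM hPdeg A hA x₀ hx₀abs z hz32
    have hPxj : ‖P.eval ((xj:ℝ):ℂ)‖ ≤ A := by
      rw [hPeval, Complex.norm_real]; exact hA xj hxjmem
    have hzxj : d/2 ≤ ‖z - ((xj:ℝ):ℂ)‖ := by
      have h1 : ‖((x₀:ℝ):ℂ) - ((xj:ℝ):ℂ)‖ ≤ 2/((N:ℝ)-1) := by
        rw [← Complex.ofReal_sub, Complex.norm_real]; exact hdist
      have h2 : ‖z - ((x₀:ℝ):ℂ)‖ ≤ ‖z - ((xj:ℝ):ℂ)‖ + ‖((x₀:ℝ):ℂ) - ((xj:ℝ):ℂ)‖ := by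
        calc ‖z - ((x₀:ℝ):ℂ)‖ = ‖(z - ((xj:ℝ):ℂ)) - (((x₀:ℝ):ℂ) - ((xj:ℝ):ℂ))‖ := by
              ring_nf
          _ ≤ ‖z - ((xj:ℝ):ℂ)‖ + ‖((x₀:ℝ):ℂ) - ((xj:ℝ):ℂ)‖ := norm_sub_le _ _
      rw [hzd] at h2
      linarith
    have heq := hreval z
    have h3 : ‖z - ((xj:ℝ):ℂ)‖ * ‖r.eval z‖ ≤ 3*A := by
      rw [← norm_mul, ← heq]
      calc ‖P.eval z - P.eval ((xj:ℝ):ℂ)‖ ≤ ‖P.eval z‖ + ‖P.eval ((xj:ℝ):ℂ)‖ :=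
            norm_sub_le _ _
        _ ≤ 3*A := by linarith
    have h4 : d/2 * ‖r.eval z‖ ≤ 3*A :=
      le_trans (mul_le_mul_of_nonneg_right hzxj (norm_nonneg _)) h3
    rw [le_div_iff₀ hd0]
    nlinarith
  have hx0cl : ((x₀:ℝ):ℂ) ∈ closure (Metric.ball ((x₀:ℝ):ℂ) d) := by
    rw [closure_ball _ hd0.ne']
    exact Metric.mem_closedBall_self hd0.le
  have hrx₀ : ‖r.eval ((x₀:ℝ):ℂ)‖ ≤ 6*A/d :=
    Complex.norm_le_of_forall_mem_frontier_norm_le Metric.isBounded_ball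
      (r.differentiable.diffContOnCl) hfr hx0cl
  have hkey : |p.eval x₀ - p.eval xj| ≤ A/2 := by
    have heq := hreval ((x₀:ℝ):ℂ)
    rw [hPeval, hPeval] at heq
    have h1 : |p.eval x₀ - p.eval xj| = ‖(((p.eval x₀ : ℝ)):ℂ) - ((p.eval xj : ℝ):ℂ)‖ := by
      rw [← Complex.ofReal_sub, Complex.norm_real, Real.norm_eq_abs]
    have h2 : ‖((x₀:ℝ):ℂ) - ((xj:ℝ):ℂ)‖ ≤ d/12 := by
      rw [← Complex.ofReal_sub, Complex.norm_real]
      exact le_trans hdist hhd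
    calc |p.eval x₀ - p.eval xj|
        = ‖(((p.eval x₀ : ℝ)):ℂ) - ((p.eval xj : ℝ):ℂ)‖ := h1
      _ = ‖((x₀:ℝ):ℂ) - ((xj:ℝ):ℂ)‖ * ‖r.eval ((x₀:ℝ):ℂ)‖ := by rw [← norm_mul, ← heq]
      _ ≤ (d/12) * (6*A/d) := by
          apply mul_le_mul h2 hrx₀ (norm_nonneg _) (by positivity)
      _ = A/2 := by field_simp; ring
  have hfinal : A ≤ 2*|p.eval xj| := by
    have h5 : |p.eval x₀| ≤ |p.eval xj| + |p.eval x₀ - p.eval xj| := by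
      calc |p.eval x₀| = |p.eval xj + (p.eval x₀ - p.eval xj)| := by ring_nf
        _ ≤ |p.eval xj| + |p.eval x₀ - p.eval xj| := abs_add_le _ _
    have h6 : A ≤ |p.eval xj| + A/2 := by
      rw [hAdef]; linarith [hkey]
    linarith
  have hnode : |p.eval xj| ≤ Finset.univ.sup'
      (⟨⟨0, by omega⟩, Finset.mem_univ _⟩ : Finset.univ.Nonempty)
      (fun j' : Fin N => |p.eval (-1 + 2 * (j' : ℝ) / ((N : ℝ) - 1))|) := by
    have h := Finset.le_sup'
      (f := fun j' : Fin N => |p.eval (-1 + 2 * (j' : ℝ) / ((N : ℝ) - 1))|)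
      (Finset.mem_univ (⟨j, hjlt⟩ : Fin N))
    rw [hxjdef]
    exact h
  have hfin2 : |p.eval x| ≤ 2 * |p.eval xj| := le_trans (hA x hx) hfinal
  refine le_trans hfin2 ?_
  exact mul_le_mul_of_nonneg_left hnode (by norm_num)
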